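/- Let p > 1/2 and for N odd let q_N = Pr[Binomial(N, p) > N/2] be the majority-vote success probability. Then q_N is the probability the majority vote is correct, q_N ≥ p for all odd N ≥ 1, and q_N is non-decreasing in N over odd values. -/

import Mathlib

open scoped ENNReal

namespace CdctAux

open Finset

noncomputable def f (p : ℝ≥0∞) (n k : ℕ) : ℝ≥0∞ :=
  (n.choose k : ℝ≥0∞) * p ^ k * (1 - p) ^ (n - k)

noncomputable def G (p : ℝ≥0∞) (n : ℕ) : ℝ≥0∞ :=
  ∑ k ∈ Finset.Ico (n / 2 + 1) (n + 1), f p n k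

lemma pascal (p : ℝ≥0∞) (n j : ℕ) :
    f p (n + 1) (j + 1) = f p n (j + 1) * (1 - p) + f p n j * p := by
  unfold f
  rcases lt_trichotomy j n with h | rfl | h
  · rw [Nat.choose_succ_succ]
    rw [show n + 1 - (j + 1) = (n - (j + 1)) + 1 by omega]
    push_cast
    rw [show n - j = (n - (j + 1)) + 1 by omega]
    rw [pow_succ, pow_succ]
    ring
  · rw [Nat.choose_self, Nat.choose_self, Nat.choose_succ_self]
    simp [pow_succ]
  · rw [Nat.choose_eq_zero_of_lt (by omega), Nat.choose_eq_zero_of_lt (by omega),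
      Nat.choose_eq_zero_of_lt (by omega)]
    simp

lemma f_zero_of_gt (p : ℝ≥0∞) {n k : ℕ} (h : n < k) : f p n k = 0 := by
  unfold f
  rw [Nat.choose_eq_zero_of_lt h]
  simp

lemma central (p : ℝ≥0∞) (m : ℕ) :
    f p (2 * m + 1) m * p = f p (2 * m + 1) (m + 1) * (1 - p) := by
  unfold f
  rw [show 2 * m + 1 - m = m + 1 by omega, show 2 * m + 1 - (m + 1) = m by omega,
    show (2 * m + 1).choose (m + 1) = (2 * m + 1).choose m by
      rw [← Nat.choose_symm (by omega : m + 1 ≤ 2 * m + 1)]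
      congr 1
      omega]
  rw [pow_succ, pow_succ]
  ring

lemma step1 (p : ℝ≥0∞) (hp1 : p ≤ 1) (m : ℕ) :
    G p (2 * m + 2) + f p (2 * m + 1) (m + 1) * (1 - p) = G p (2 * m + 1) := by
  have hq : (1 - p) + p = 1 := tsub_add_cancel_of_le hp1
  have h1 : G p (2 * m + 1) = ∑ i ∈ range (m + 1), f p (2 * m + 1) (m + 1 + i) := by
    unfold G
    rw [show (2 * m + 1) / 2 + 1 = m + 1 by omega, Finset.sum_Ico_eq_sum_range,
      show 2 * m + 1 + 1 - (m + 1) = m + 1 by omega]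
  have h2 : G p (2 * m + 2) = ∑ i ∈ range (m + 1), f p (2 * m + 2) (m + 2 + i) := by
    unfold G
    rw [show (2 * m + 2) / 2 + 1 = m + 2 by omega, Finset.sum_Ico_eq_sum_range,
      show 2 * m + 2 + 1 - (m + 2) = m + 1 by omega]
  have h3 : ∀ i, f p (2 * m + 2) (m + 2 + i)
      = f p (2 * m + 1) (m + 2 + i) * (1 - p) + f p (2 * m + 1) (m + 1 + i) * p := by
    intro i
    have := pascal p (2 * m + 1) (m + 1 + i)
    rw [show 2 * m + 1 + 1 = 2 * m + 2 by omega, show m + 1 + i + 1 = m + 2 + i by omega] at this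
    exact this
  have hsplit : (∑ i ∈ range (m + 1), f p (2 * m + 1) (m + 2 + i))
      + f p (2 * m + 1) (m + 1) = G p (2 * m + 1) := by
    have e := (Finset.sum_range_succ' (fun i => f p (2 * m + 1) (m + 1 + i)) (m + 1)).symm.trans
      (Finset.sum_range_succ (fun i => f p (2 * m + 1) (m + 1 + i)) (m + 1))
    rw [f_zero_of_gt p (show 2 * m + 1 < m + 1 + (m + 1) by omega), add_zero, ← h1, add_zero] at e
    rw [← e]
    congr 1
    exact Finset.sum_congr rfl fun i _ => by congr 1; omega
  calc G p (2 * m + 2) + f p (2 * m + 1) (m + 1) * (1 - p)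
      = (∑ i ∈ range (m + 1), f p (2 * m + 1) (m + 2 + i)) * (1 - p)
        + (∑ i ∈ range (m + 1), f p (2 * m + 1) (m + 1 + i)) * p
        + f p (2 * m + 1) (m + 1) * (1 - p) := by
        rw [h2]
        congr 1
        rw [Finset.sum_congr rfl (fun i _ => h3 i), Finset.sum_add_distrib,
          ← Finset.sum_mul, ← Finset.sum_mul]
    _ = ((∑ i ∈ range (m + 1), f p (2 * m + 1) (m + 2 + i)) + f p (2 * m + 1) (m + 1)) * (1 - p)
        + G p (2 * m + 1) * p := by rw [← h1, add_mul]; ring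
    _ = G p (2 * m + 1) * ((1 - p) + p) := by rw [hsplit, mul_add]
    _ = G p (2 * m + 1) := by rw [hq, mul_one]

lemma step2 (p : ℝ≥0∞) (hp1 : p ≤ 1) (m : ℕ) :
    G p (2 * m + 3) = G p (2 * m + 2) + f p (2 * m + 2) (m + 1) * p := by
  have hq : (1 - p) + p = 1 := tsub_add_cancel_of_le hp1
  have h2 : G p (2 * m + 2) = ∑ i ∈ range (m + 1), f p (2 * m + 2) (m + 2 + i) := by
    unfold G
    rw [show (2 * m + 2) / 2 + 1 = m + 2 by omega, Finset.sum_Ico_eq_sum_range,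
      show 2 * m + 2 + 1 - (m + 2) = m + 1 by omega]
  have h3 : G p (2 * m + 3) = ∑ i ∈ range (m + 2), f p (2 * m + 3) (m + 2 + i) := by
    unfold G
    rw [show (2 * m + 3) / 2 + 1 = m + 2 by omega, Finset.sum_Ico_eq_sum_range,
      show 2 * m + 3 + 1 - (m + 2) = m + 2 by omega]
  have hpas : ∀ i, f p (2 * m + 3) (m + 2 + i)
      = f p (2 * m + 2) (m + 2 + i) * (1 - p) + f p (2 * m + 2) (m + 1 + i) * p := by
    intro i
    have := pascal p (2 * m + 2) (m + 1 + i)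
    rw [show 2 * m + 2 + 1 = 2 * m + 3 by omega, show m + 1 + i + 1 = m + 2 + i by omega] at this
    exact this
  have hfirst : ∑ i ∈ range (m + 2), f p (2 * m + 2) (m + 2 + i) = G p (2 * m + 2) := by
    rw [Finset.sum_range_succ, f_zero_of_gt p (show 2 * m + 2 < m + 2 + (m + 1) by omega),
      add_zero, h2]
  have hsecond : ∑ i ∈ range (m + 2), f p (2 * m + 2) (m + 1 + i)
      = f p (2 * m + 2) (m + 1) + G p (2 * m + 2) := by
    have e := Finset.sum_range_succ' (fun i => f p (2 * m + 2) (m + 1 + i)) (m + 1)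
    rw [e, add_comm]
    congr 1
    rw [h2]
    exact Finset.sum_congr rfl fun i _ => by congr 1; omega
  calc G p (2 * m + 3)
      = (∑ i ∈ range (m + 2), f p (2 * m + 2) (m + 2 + i)) * (1 - p)
        + (∑ i ∈ range (m + 2), f p (2 * m + 2) (m + 1 + i)) * p := by
        rw [h3, Finset.sum_congr rfl (fun i _ => hpas i), Finset.sum_add_distrib,
          ← Finset.sum_mul, ← Finset.sum_mul]
    _ = G p (2 * m + 2) * (1 - p) + (f p (2 * m + 2) (m + 1) + G p (2 * m + 2)) * p := by
        rw [hfirst, hsecond]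
    _ = G p (2 * m + 2) * ((1 - p) + p) + f p (2 * m + 2) (m + 1) * p := by ring
    _ = G p (2 * m + 2) + f p (2 * m + 2) (m + 1) * p := by rw [hq, mul_one]

lemma mainstep (p : ℝ≥0∞) (hp1 : p ≤ 1) (hp : 1 / 2 < p) (m : ℕ) :
    G p (2 * m + 1) ≤ G p (2 * m + 3) := by
  have hpt : p ≠ ∞ := (lt_of_le_of_lt hp1 ENNReal.one_lt_top).ne
  have hqt : (1 : ℝ≥0∞) - p ≠ ∞ := ENNReal.sub_ne_top ENNReal.one_ne_top
  have hB : f p (2 * m + 2) (m + 1)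
      = f p (2 * m + 1) (m + 1) * (1 - p) + f p (2 * m + 1) (m + 1) * (1 - p) := by
    have := pascal p (2 * m + 1) m
    rw [show 2 * m + 1 + 1 = 2 * m + 2 by omega] at this
    rw [this, central p m]
  have hkey : G p (2 * m + 3) + f p (2 * m + 1) (m + 1) * (1 - p)
      = G p (2 * m + 1) + (f p (2 * m + 1) (m + 1) * (1 - p)) * (2 * p) := by
    rw [step2 p hp1 m, hB]
    calc G p (2 * m + 2)
          + (f p (2 * m + 1) (m + 1) * (1 - p) + f p (2 * m + 1) (m + 1) * (1 - p)) * p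
          + f p (2 * m + 1) (m + 1) * (1 - p)
        = (G p (2 * m + 2) + f p (2 * m + 1) (m + 1) * (1 - p))
          + (f p (2 * m + 1) (m + 1) * (1 - p)) * (2 * p) := by ring
      _ = G p (2 * m + 1) + (f p (2 * m + 1) (m + 1) * (1 - p)) * (2 * p) := by
          rw [step1 p hp1 m]
  have hfin : f p (2 * m + 1) (m + 1) * (1 - p) ≠ ∞ := by
    unfold f
    exact ENNReal.mul_ne_top
      (ENNReal.mul_ne_top
        (ENNReal.mul_ne_top (ENNReal.natCast_ne_top _) (ENNReal.pow_ne_top hpt))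
        (ENNReal.pow_ne_top hqt)) hqt
  have h2p : (1 : ℝ≥0∞) ≤ 2 * p := by
    have h := mul_le_mul_right hp.le (2 : ℝ≥0∞)
    rwa [show (2 : ℝ≥0∞) * (1 / 2) = 1 by
      rw [one_div, ENNReal.mul_inv_cancel (by norm_num) (by norm_num)]] at h
  have hle : G p (2 * m + 1) + f p (2 * m + 1) (m + 1) * (1 - p)
      ≤ G p (2 * m + 3) + f p (2 * m + 1) (m + 1) * (1 - p) := by
    rw [hkey]
    exact add_le_add le_rfl (le_mul_of_one_le_right' h2p)
  exact (ENNReal.add_le_add_iff_right hfin).mp hle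

lemma G_mono_odd (p : ℝ≥0∞) (hp1 : p ≤ 1) (hp : 1 / 2 < p) :
    ∀ a b : ℕ, a ≤ b → G p (2 * a + 1) ≤ G p (2 * b + 1) := by
  intro a b hab
  induction b, hab using Nat.le_induction with
  | base => exact le_refl _
  | succ n hn ih =>
      refine le_trans ih ?_
      have h := mainstep p hp1 hp n
      rw [show 2 * (n + 1) + 1 = 2 * n + 3 by omega]
      exact h

end CdctAux

/-- Condorcet jury theorem (finite-N part): for p > 1/2 and odd N, the majority-vote
success probability q_N = Pr[Binomial(N,p) > N/2] satisfies q_N ≥ p, and q_N is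
non-decreasing in N over odd values. -/
theorem stmt11 (p : ℝ≥0∞) (hp1 : p ≤ 1) (hp : 1 / 2 < p)
    (q : ℕ → ℝ≥0∞)
    (hq : ∀ N, q N = (PMF.binomial p.toNNReal (by simpa using ENNReal.toNNReal_mono ENNReal.one_ne_top hp1) N).toMeasure {k | (N : ℝ) / 2 < (k : ℝ)}) :
    (∀ N, Odd N → p ≤ q N) ∧
    (∀ N M, Odd N → Odd M → N ≤ M → q N ≤ q M) := by
  classical
  have hqG : ∀ N, q N = CdctAux.G p N := by
    intro N
    rw [hq N, PMF.toMeasure_apply_fintype]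
    have hterm : ∀ x : Fin (N + 1),
        Set.indicator {k : Fin (N + 1) | (N : ℝ) / 2 < (k : ℝ)} (PMF.binomial p.toNNReal (by simpa using ENNReal.toNNReal_mono ENNReal.one_ne_top hp1) N) x
        = if N / 2 + 1 ≤ (x : ℕ) then CdctAux.f p N x else 0 := by
      intro x
      rw [Set.indicator_apply]
      have hcond : ((N : ℝ) / 2 < ((x : ℕ) : ℝ)) ↔ N / 2 + 1 ≤ (x : ℕ) := by
        rw [div_lt_iff₀ (by norm_num : (0:ℝ) < 2)]
        rw [show ((x : ℕ) : ℝ) * 2 = (((x : ℕ) * 2 : ℕ) : ℝ) by push_cast; ring, Nat.cast_lt]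
        omega
      have hval : PMF.binomial p.toNNReal (by simpa using ENNReal.toNNReal_mono ENNReal.one_ne_top hp1) N x = CdctAux.f p N x := by
        refine (PMF.binomial_apply _ _ _ _).trans ?_
        rw [ENNReal.coe_toNNReal (ne_top_of_le_ne_top ENNReal.one_ne_top hp1)]
        unfold CdctAux.f
        rw [Fin.val_last]
        ring
      simp only [Set.mem_setOf_eq, hcond, hval]
    rw [Finset.sum_congr rfl (fun x _ => hterm x)]
    rw [Fin.sum_univ_eq_sum_range (fun i => if N / 2 + 1 ≤ i then CdctAux.f p N i else 0)]
    unfold CdctAux.G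
    rw [← Finset.sum_filter]
    congr 1
    ext k
    simp only [Finset.mem_filter, Finset.mem_range, Finset.mem_Ico]
    omega
  have hq1 : q 1 = p := by
    rw [hqG 1]
    unfold CdctAux.G
    norm_num
    simp [CdctAux.f]
  have hmono : ∀ N M, Odd N → Odd M → N ≤ M → q N ≤ q M := by
    intro N M hN hM hNM
    obtain ⟨a, ha⟩ := hN
    obtain ⟨b, hb⟩ := hM
    rw [hqG N, hqG M, ha, hb]
    exact CdctAux.G_mono_odd p hp1 hp a b (by omega)
  refine ⟨?_, hmono⟩
  intro N hN
  rw [← hq1]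
  exact hmono 1 N odd_one hN hN.pos
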